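/- Free-lunch privacy as a PML constraint under all full-support priors: For every ε ≥ 0, the mechanism p satisfies ε-free-lunch privacy if and only if for every full-support prior q on 𝒟^n, every x ∈ 𝒟^n, and every y ∈ 𝒴: p(x)(y) ≤ e^ε · Σ_{x'∈𝒟^n} p(x')(y) · q(x'). (The displayed inequality is the pointwise-maximal-leakage constraint ℓ(X → y) ≤ ε.) -/

import Mathlib

open Finset

/-- A probability mass function on a finite type. -/
def IsPMF {α : Type*} [Fintype α] (p : α → ℝ) : Prop :=
  (∀ a, 0 ≤ p a) ∧ ∑ a, p a = 1

/-- A mechanism on databases: a conditional pmf from `𝒟^n` to `𝒴`. -/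
def IsMechanism {𝒟 𝒴 : Type*} [Fintype 𝒴] {n : ℕ}
    (p : (Fin n → 𝒟) → 𝒴 → ℝ) : Prop :=
  ∀ x, (∀ y, 0 ≤ p x y) ∧ ∑ y, p x y = 1

/-- `ε`-differential privacy. -/
def DiffPrivate {𝒟 𝒴 : Type*} {n : ℕ} (p : (Fin n → 𝒟) → 𝒴 → ℝ) (ε : ℝ) : Prop :=
  ∀ (x : Fin n → 𝒟) (i : Fin n) (d' : 𝒟) (y : 𝒴),
    p x y ≤ Real.exp ε * p (Function.update x i d') y

/-- `ε`-free-lunch privacy. -/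
def FreeLunch {𝒟 𝒴 : Type*} {n : ℕ} (p : (Fin n → 𝒟) → 𝒴 → ℝ) (ε : ℝ) : Prop :=
  ∀ (x x' : Fin n → 𝒟) (y : 𝒴), p x y ≤ Real.exp ε * p x' y

/-- **Free-lunch privacy as a PML constraint under all full-support priors.** The
mechanism `p` satisfies `ε`-free-lunch privacy iff for every full-support prior `q`,
every database `x`, and every outcome `y`,
`p(x)(y) ≤ e^ε · Σ_{x'} p(x')(y) · q(x')`, i.e. the PML constraint `ℓ(X → y) ≤ ε`. -/
theorem free_lunch_iff_pml_all_priors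
    {𝒟 𝒴 : Type*} [Fintype 𝒟] [Fintype 𝒴] [Nonempty 𝒴]
    (hD : 2 ≤ Fintype.card 𝒟) {n : ℕ} (hn : 1 ≤ n)
    (p : (Fin n → 𝒟) → 𝒴 → ℝ) (hp : IsMechanism p)
    (ε : ℝ) (hε : 0 ≤ ε) :
    FreeLunch p ε ↔
      ∀ q : (Fin n → 𝒟) → ℝ, IsPMF q → (∀ x, 0 < q x) →
        ∀ (x : Fin n → 𝒟) (y : 𝒴),
          p x y ≤ Real.exp ε * ∑ x' : Fin n → 𝒟, p x' y * q x' := by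
  classical
  have hN : Nonempty 𝒟 := Fintype.card_pos_iff.mp (by omega)
  set N : ℕ := Fintype.card (Fin n → 𝒟) with hNdef
  have hNpos : 0 < N := Fintype.card_pos
  constructor
  · intro hFL q hq hqpos x y
    calc p x y = ∑ x' : Fin n → 𝒟, p x y * q x' := by
          rw [← Finset.mul_sum, hq.2, mul_one]
      _ ≤ ∑ x' : Fin n → 𝒟, Real.exp ε * p x' y * q x' := by
          apply Finset.sum_le_sum
          intro x' _
          exact mul_le_mul_of_nonneg_right (hFL x x' y) (hq.1 x')
      _ = Real.exp ε * ∑ x' : Fin n → 𝒟, p x' y * q x' := by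
          rw [Finset.mul_sum]; simp [mul_assoc]
  · intro H x x' y
    have key : ∀ δ : ℝ, 0 < δ → δ < 1 → p x y ≤ Real.exp ε * p x' y + Real.exp ε * δ := by
      intro δ hδ0 hδ1
      set q : (Fin n → 𝒟) → ℝ := fun z => δ / N + (1 - δ) * (if z = x' then 1 else 0) with hqdef
      have hqpmf : IsPMF q := by
        constructor
        · intro a
          have : (0:ℝ) < δ / N := div_pos hδ0 (by exact_mod_cast hNpos)
          have h1 : (0:ℝ) ≤ (1 - δ) * (if a = x' then 1 else 0) := by
            apply mul_nonneg (by linarith); split <;> norm_num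
          simp only [hqdef]; linarith
        · simp only [hqdef]
          rw [Finset.sum_add_distrib, Finset.sum_const, ← Finset.mul_sum]
          rw [Finset.sum_ite_eq' Finset.univ x' (fun _ => (1:ℝ))]
          simp only [Finset.mem_univ, if_true, mul_one, Finset.card_univ]
          have hNval : ((N:ℕ):ℝ) ≠ 0 := by exact_mod_cast hNpos.ne'
          have hpow : ((Fintype.card 𝒟 : ℕ) : ℝ) ^ n = (N:ℝ) := by
            rw [hNdef, Fintype.card_fun, Fintype.card_fin]; push_cast; ring
          field_simp
          rw [nsmul_eq_mul, ← hNdef, mul_div_assoc', mul_comm, mul_div_assoc, div_self hNval, mul_one]; ring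
      have hqpos : ∀ z, 0 < q z := by
        intro z
        have h2 : (0:ℝ) < δ / N := div_pos hδ0 (by exact_mod_cast hNpos)
        have h1 : (0:ℝ) ≤ (1 - δ) * (if z = x' then 1 else 0) := by
          apply mul_nonneg (by linarith); split <;> norm_num
        simp only [hqdef]; linarith
      have hle := H q hqpmf hqpos x y
      have hbound : ∑ z : Fin n → 𝒟, p z y * q z ≤ p x' y + δ := by
        have hsum : ∑ z : Fin n → 𝒟, p z y * q z
            = (∑ z : Fin n → 𝒟, p z y * (δ / N)) + (1 - δ) * p x' y := by
          simp only [hqdef, mul_add]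
          rw [Finset.sum_add_distrib]
          congr 1
          rw [Finset.sum_congr rfl (fun z _ => by by_cases h : z = x' <;> simp [h, mul_comm] : ∀ z ∈ Finset.univ,
            p z y * ((1 - δ) * (if z = x' then 1 else 0)) = (if z = x' then (1-δ) * p z y else 0))]
          rw [Finset.sum_ite_eq' Finset.univ x' (fun z => (1-δ) * p z y)]
          simp
        rw [hsum]
        have h1 : ∑ z : Fin n → 𝒟, p z y * (δ / N) ≤ δ := by
          have : ∀ z : Fin n → 𝒟, p z y * (δ / N) ≤ δ / N := by
            intro z
            have hz1 : p z y ≤ 1 := by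
              have := (hp z).2
              calc p z y ≤ ∑ y', p z y' :=
                Finset.single_le_sum (fun y' _ => (hp z).1 y') (Finset.mem_univ y)
                _ = 1 := this
            nlinarith [div_pos hδ0 (show (0:ℝ) < N by exact_mod_cast hNpos)]
          calc ∑ z : Fin n → 𝒟, p z y * (δ / N) ≤ ∑ _z : Fin n → 𝒟, δ / N :=
                Finset.sum_le_sum (fun z _ => this z)
            _ = N * (δ / N) := by rw [Finset.sum_const, Finset.card_univ, nsmul_eq_mul]
            _ = δ := by field_simp
        have h2 : (1 - δ) * p x' y ≤ p x' y := by
          nlinarith [(hp x').1 y]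
        linarith
      calc p x y ≤ Real.exp ε * ∑ z : Fin n → 𝒟, p z y * q z := hle
        _ ≤ Real.exp ε * (p x' y + δ) :=
            mul_le_mul_of_nonneg_left hbound (Real.exp_nonneg ε)
        _ = Real.exp ε * p x' y + Real.exp ε * δ := by ring
    -- take δ → 0
    have : ∀ η : ℝ, 0 < η → p x y ≤ Real.exp ε * p x' y + η := by
      intro η hη
      set δ := min (η / (2 * Real.exp ε)) (1/2) with hδdef
      have hexp : 0 < Real.exp ε := Real.exp_pos ε
      have hδ0 : 0 < δ := lt_min (by positivity) (by norm_num)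
      have hδ1 : δ < 1 := lt_of_le_of_lt (min_le_right _ _) (by norm_num)
      have := key δ hδ0 hδ1
      have hδle : Real.exp ε * δ ≤ η := by
        have : δ ≤ η / (2 * Real.exp ε) := min_le_left _ _
        calc Real.exp ε * δ ≤ Real.exp ε * (η / (2 * Real.exp ε)) :=
              mul_le_mul_of_nonneg_left this (le_of_lt hexp)
          _ = η / 2 := by field_simp
          _ ≤ η := by linarith
      linarith
    exact le_of_forall_pos_le_add this
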